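/- Let H be a subgroup of a finite group G containing a pronormal subgroup S of G. Then H is pronormal in G if and only if for every g ∈ N_G(S), the subgroups H and H^g are conjugate by an element of ⟨H, H^g⟩. -/

import Mathlib

open Pointwise

/-- `conjSub H g` is the conjugate subgroup `H^g = g⁻¹Hg`. -/
def conjSub {G : Type*} [Group G] (H : Subgroup G) (g : G) : Subgroup G :=
  MulAut.conj g⁻¹ • H

/-- `H` is pronormal: for every `g`, `H` and `H^g` are conjugate in `⟨H, H^g⟩`. -/
def IsPronormal {G : Type*} [Group G] (H : Subgroup G) : Prop :=
  ∀ g : G, ∃ x ∈ H ⊔ conjSub H g, conjSub H x = conjSub H g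

lemma mem_conjSub {G : Type*} [Group G] {H : Subgroup G} {g a : G} :
    a ∈ conjSub H g ↔ g * a * g⁻¹ ∈ H := by
  simp [conjSub, Subgroup.mem_pointwise_smul_iff_inv_smul_mem, mul_assoc]

lemma conjSub_conjSub {G : Type*} [Group G] (H : Subgroup G) (g g' : G) :
    conjSub (conjSub H g) g' = conjSub H (g * g') := by
  ext a
  simp [mem_conjSub, mul_assoc]

lemma conjSub_one {G : Type*} [Group G] (H : Subgroup G) : conjSub H 1 = H := by
  ext a; simp [mem_conjSub]

lemma conjSub_mono {G : Type*} [Group G] {H K : Subgroup G} (h : H ≤ K) (g : G) :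
    conjSub H g ≤ conjSub K g := fun a ha => mem_conjSub.mpr (h (mem_conjSub.mp ha))

theorem stmt_1 {G : Type*} [Group G] [Finite G] (S H : Subgroup G)
    (hSH : S ≤ H) (hS : IsPronormal S) :
    IsPronormal H ↔
      ∀ g ∈ Subgroup.normalizer (S : Set G), ∃ x ∈ H ⊔ conjSub H g, conjSub H x = conjSub H g := by
  constructor
  · intro hH g _
    exact hH g
  · intro hyp g
    set K := conjSub H g with hK
    -- Step 1: use pronormality of S
    obtain ⟨x, hxmem, hxconj⟩ := hS g
    have hxHK : x ∈ H ⊔ K := by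
      refine SetLike.le_def.mp ?_ hxmem
      exact sup_le (le_trans hSH le_sup_left)
        (le_trans (conjSub_mono hSH g) le_sup_right)
    -- Step 2: n := g * x⁻¹ normalizes S
    set n := g * x⁻¹ with hn
    have key : ∀ a : G, x * a * x⁻¹ ∈ S ↔ g * a * g⁻¹ ∈ S := fun a => by
      rw [← mem_conjSub, ← mem_conjSub, hxconj]
    have hnS : n ∈ Subgroup.normalizer (S : Set G) := by
      rw [Subgroup.mem_normalizer_iff]
      intro h
      have := key (x⁻¹ * h * x)
      constructor
      · intro hh
        have h1 : g * (x⁻¹ * h * x) * g⁻¹ ∈ S := this.mp (by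
          have : x * (x⁻¹ * h * x) * x⁻¹ = h := by group
          rw [this]; exact hh)
        have e : n * h * n⁻¹ = g * (x⁻¹ * h * x) * g⁻¹ := by rw [hn]; group
        rw [e]; exact h1
      · intro hh
        have e : n * h * n⁻¹ = g * (x⁻¹ * h * x) * g⁻¹ := by rw [hn]; group
        rw [e] at hh
        have h1 := this.mpr hh
        have e2 : x * (x⁻¹ * h * x) * x⁻¹ = h := by group
        rw [e2] at h1; exact h1
    obtain ⟨y, hymem, hyconj⟩ := hyp n hnS
    -- conjSub H n = conjSub K x⁻¹
    have hHn : conjSub H n = conjSub K x⁻¹ := by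
      rw [hK, conjSub_conjSub]
    -- conjSub K x⁻¹ ≤ H ⊔ K
    have hKle : conjSub K x⁻¹ ≤ H ⊔ K := by
      intro a ha
      rw [mem_conjSub] at ha
      rw [inv_inv] at ha
      have e : a = x * (x⁻¹ * a * x) * x⁻¹ := by group
      rw [e]
      exact mul_mem (mul_mem hxHK (le_sup_right (α := Subgroup G) ha)) (inv_mem hxHK)
    refine ⟨y * x, ?_, ?_⟩
    · have : y ∈ H ⊔ K := by
        refine SetLike.le_def.mp (sup_le le_sup_left ?_) hymem
        rw [hHn]; exact hKle
      exact mul_mem this hxHK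
    · rw [← conjSub_conjSub, hyconj, hHn, conjSub_conjSub, inv_mul_cancel, conjSub_one]
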